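/- Assume additionally that z1 is a unit of H. For n ∈ ℤ let W[n] denote the F-linear span in W of { d^a · ι(h) · u^b : h ∈ H, a, b ∈ ℕ, (b : ℤ) − a = n }. Then W[0] is closed under multiplication (an F-subalgebra of W), each W[n] satisfies W[0]·W[n] ⊆ W[n], and each W[n] is a free left W[0]-module of rank one: there exists x ∈ W[n] such that the map W[0] → W[n] sending a to a·x is bijective. -/

import Mathlib

/-!
STATEMENT: Assume `z1` is a unit of `H`.  For `n ∈ ℤ` let `W[n]` denote the `F`-linear
span in `W` of `{ d^a · ι(h) · u^b : h ∈ H, a b ∈ ℕ, (b : ℤ) − a = n }`.  Then `W[0]`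
is closed under multiplication, `W[0]·W[n] ⊆ W[n]` for every `n`, and each `W[n]` is a
free left `W[0]`-module of rank one: there exists `x ∈ W[n]` such that the map
`W[0] → W[n]`, `a ↦ a·x`, is bijective.
-/

/-- Generators of the triangular generalized Weyl algebra: a copy of `H` plus `d` and `u`. -/
inductive GWAGen (H : Type) where
  | base : H → GWAGen H
  | d : GWAGen H
  | u : GWAGen H

/-- The defining relations of the triangular GWA `W(H, θ, z0, z1)`:
`ι` is an `F`-algebra map on the copy of `H`, `u·h = θ(h)·u`, `h·d = d·θ(h)`,
and `u·d = z0 + d·z1·u`. -/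
inductive GWARel (F : Type) [Field F] (H : Type) [CommRing H] [Algebra F H]
    (θ : H ≃ₐ[F] H) (z0 z1 : H) :
    FreeAlgebra F (GWAGen H) → FreeAlgebra F (GWAGen H) → Prop
  | base_one : GWARel F H θ z0 z1 (FreeAlgebra.ι F (GWAGen.base (1 : H))) 1
  | base_add (a b : H) : GWARel F H θ z0 z1
      (FreeAlgebra.ι F (GWAGen.base (a + b)))
      (FreeAlgebra.ι F (GWAGen.base a) + FreeAlgebra.ι F (GWAGen.base b))
  | base_mul (a b : H) : GWARel F H θ z0 z1
      (FreeAlgebra.ι F (GWAGen.base (a * b)))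
      (FreeAlgebra.ι F (GWAGen.base a) * FreeAlgebra.ι F (GWAGen.base b))
  | base_smul (r : F) (a : H) : GWARel F H θ z0 z1
      (FreeAlgebra.ι F (GWAGen.base (r • a)))
      (r • FreeAlgebra.ι F (GWAGen.base a))
  | u_comm (a : H) : GWARel F H θ z0 z1
      (FreeAlgebra.ι F GWAGen.u * FreeAlgebra.ι F (GWAGen.base a))
      (FreeAlgebra.ι F (GWAGen.base (θ a)) * FreeAlgebra.ι F GWAGen.u)
  | d_comm (a : H) : GWARel F H θ z0 z1
      (FreeAlgebra.ι F (GWAGen.base a) * FreeAlgebra.ι F GWAGen.d)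
      (FreeAlgebra.ι F GWAGen.d * FreeAlgebra.ι F (GWAGen.base (θ a)))
  | ud : GWARel F H θ z0 z1
      (FreeAlgebra.ι F GWAGen.u * FreeAlgebra.ι F GWAGen.d)
      (FreeAlgebra.ι F (GWAGen.base z0) +
        FreeAlgebra.ι F GWAGen.d * FreeAlgebra.ι F (GWAGen.base z1) * FreeAlgebra.ι F GWAGen.u)

/-- The triangular generalized Weyl algebra `W(H, θ, z0, z1)`, realized as a
`RingQuot` of the free `F`-algebra on the generators. -/
abbrev GWA (F : Type) [Field F] (H : Type) [CommRing H] [Algebra F H]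
    (θ : H ≃ₐ[F] H) (z0 z1 : H) : Type :=
  RingQuot (GWARel F H θ z0 z1)

variable (F : Type) [Field F] (H : Type) [CommRing H] [Algebra F H]
variable (θ : H ≃ₐ[F] H) (z0 z1 : H)

/-- The canonical map `ι : H → W`. -/
noncomputable def GWA.incl (h : H) : GWA F H θ z0 z1 :=
  RingQuot.mkAlgHom F (GWARel F H θ z0 z1) (FreeAlgebra.ι F (GWAGen.base h))

/-- The element `d` of `W`. -/
noncomputable def GWA.dd : GWA F H θ z0 z1 :=
  RingQuot.mkAlgHom F (GWARel F H θ z0 z1) (FreeAlgebra.ι F GWAGen.d)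

/-- The element `u` of `W`. -/
noncomputable def GWA.uu : GWA F H θ z0 z1 :=
  RingQuot.mkAlgHom F (GWARel F H θ z0 z1) (FreeAlgebra.ι F GWAGen.u)

/-- The `n`-th graded piece `W[n]` of `W` (for the grading with `deg u = 1`,
`deg d = -1`, `deg H = 0`). -/
noncomputable def GWA.graded (n : ℤ) : Submodule F (GWA F H θ z0 z1) :=
  Submodule.span F
    { x : GWA F H θ z0 z1 | ∃ a b : ℕ, ∃ h : H, (b : ℤ) - (a : ℤ) = n ∧
        x = (GWA.dd F H θ z0 z1) ^ a * GWA.incl F H θ z0 z1 h * (GWA.uu F H θ z0 z1) ^ b }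

noncomputable section
namespace GWAAux
variable (F : Type) [Field F] (H : Type) [CommRing H] [Algebra F H]
variable (θ : H ≃ₐ[F] H) (z0 z1 : H)

local notation "W" => GWA F H θ z0 z1
local notation "D" => GWA.dd F H θ z0 z1
local notation "U" => GWA.uu F H θ z0 z1
local notation "κ" => GWA.incl F H θ z0 z1

abbrev mk : FreeAlgebra F (GWAGen H) →ₐ[F] W := RingQuot.mkAlgHom F (GWARel F H θ z0 z1)

theorem incl_one : κ (1 : H) = 1 := by
  have := RingQuot.mkAlgHom_rel F (GWARel.base_one (F := F) (H := H) (θ := θ) (z0 := z0) (z1 := z1))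
  simpa [GWA.incl] using this

theorem incl_add (a b : H) : κ (a + b) = κ a + κ b := by
  have := RingQuot.mkAlgHom_rel F (GWARel.base_add (F := F) (θ := θ) (z0 := z0) (z1 := z1) a b)
  simpa [GWA.incl] using this

theorem incl_mul (a b : H) : κ (a * b) = κ a * κ b := by
  have := RingQuot.mkAlgHom_rel F (GWARel.base_mul (F := F) (θ := θ) (z0 := z0) (z1 := z1) a b)
  simpa [GWA.incl] using this

theorem incl_smul (r : F) (a : H) : κ (r • a) = r • κ a := by
  have := RingQuot.mkAlgHom_rel F (GWARel.base_smul (F := F) (θ := θ) (z0 := z0) (z1 := z1) r a)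
  simpa [GWA.incl] using this

theorem rel_u (a : H) : U * κ a = κ (θ a) * U := by
  have := RingQuot.mkAlgHom_rel F (GWARel.u_comm (F := F) (θ := θ) (z0 := z0) (z1 := z1) a)
  simpa [GWA.incl, GWA.uu] using this

theorem rel_d (a : H) : κ a * D = D * κ (θ a) := by
  have := RingQuot.mkAlgHom_rel F (GWARel.d_comm (F := F) (θ := θ) (z0 := z0) (z1 := z1) a)
  simpa [GWA.incl, GWA.dd] using this

theorem rel_ud : U * D = κ z0 + D * κ z1 * U := by
  have := RingQuot.mkAlgHom_rel F (GWARel.ud (F := F) (θ := θ) (z0 := z0) (z1 := z1))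
  simpa [GWA.incl, GWA.dd, GWA.uu] using this

theorem incl_zero : κ (0 : H) = 0 := by
  have h := incl_add F H θ z0 z1 0 0
  simpa using h.symm

theorem incl_dpow (a : ℕ) (h : H) : κ h * D ^ a = D ^ a * κ ((θ ^ a) h) := by
  induction a generalizing h with
  | zero => simp
  | succ a ih =>
      rw [pow_succ, ← mul_assoc, ih, mul_assoc, rel_d, ← mul_assoc, ← pow_succ]
      congr 2
      rw [pow_succ']
      rfl

theorem upow_incl (b : ℕ) (h : H) : U ^ b * κ h = κ ((θ ^ b) h) * U ^ b := by
  induction b generalizing h with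
  | zero => simp
  | succ b ih =>
      rw [pow_succ, mul_assoc, rel_u, ← mul_assoc, ih, mul_assoc, ← pow_succ]
      congr 2

end GWAAux
namespace GWAAux
variable (F : Type) [Field F] (H : Type) [CommRing H] [Algebra F H]
variable (θ : H ≃ₐ[F] H) (z0 z1 : H)

local notation "W" => GWA F H θ z0 z1
local notation "D" => GWA.dd F H θ z0 z1
local notation "U" => GWA.uu F H θ z0 z1
local notation "κ" => GWA.incl F H θ z0 z1

/-- monomial `d^a h u^b`. -/
def mono (a : ℕ) (h : H) (b : ℕ) : W := D ^ a * κ h * U ^ b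

theorem graded_eq (n : ℤ) : GWA.graded F H θ z0 z1 n =
    Submodule.span F {x : W | ∃ a b : ℕ, ∃ h : H, (b : ℤ) - a = n ∧ x = mono F H θ z0 z1 a h b} :=
  rfl

/-- span of monomials of degree `n` with `u`-exponent `< B`. -/
def Wlt (n : ℤ) (B : ℕ) : Submodule F W :=
  Submodule.span F {x : W | ∃ a b : ℕ, ∃ h : H, b < B ∧ (b : ℤ) - a = n ∧ x = mono F H θ z0 z1 a h b}

theorem mono_mem_Wlt {a b B : ℕ} {n : ℤ} (h : H) (hb : b < B) (hd : (b : ℤ) - a = n) :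
    mono F H θ z0 z1 a h b ∈ Wlt F H θ z0 z1 n B :=
  Submodule.subset_span ⟨a, b, h, hb, hd, rfl⟩

theorem mono_mem_graded {a b : ℕ} {n : ℤ} (h : H) (hd : (b : ℤ) - a = n) :
    mono F H θ z0 z1 a h b ∈ GWA.graded F H θ z0 z1 n :=
  Submodule.subset_span ⟨a, b, h, hd, rfl⟩

theorem Wlt_le_graded (n : ℤ) (B : ℕ) : Wlt F H θ z0 z1 n B ≤ GWA.graded F H θ z0 z1 n := by
  rw [Wlt, graded_eq]
  exact Submodule.span_le.2 (fun x ⟨a, b, h, _, hd, hx⟩ => Submodule.subset_span ⟨a, b, h, hd, hx⟩)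

theorem Wlt_mono {n : ℤ} {B B' : ℕ} (hB : B ≤ B') : Wlt F H θ z0 z1 n B ≤ Wlt F H θ z0 z1 n B' :=
  Submodule.span_le.2 (fun x ⟨a, b, h, hb, hd, hx⟩ =>
    Submodule.subset_span ⟨a, b, h, lt_of_lt_of_le hb hB, hd, hx⟩)

theorem graded_le_of_mono_mem {n : ℤ} {S : Submodule F W}
    (hS : ∀ a b : ℕ, ∀ h : H, (b : ℤ) - a = n → mono F H θ z0 z1 a h b ∈ S) :
    GWA.graded F H θ z0 z1 n ≤ S := by
  rw [graded_eq]
  exact Submodule.span_le.2 (fun x ⟨a, b, h, hd, hx⟩ => hx ▸ hS a b h hd)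

theorem Wlt_le_of_mono_mem {n : ℤ} {B : ℕ} {S : Submodule F W}
    (hS : ∀ a b : ℕ, ∀ h : H, b < B → (b : ℤ) - a = n → mono F H θ z0 z1 a h b ∈ S) :
    Wlt F H θ z0 z1 n B ≤ S :=
  Submodule.span_le.2 (fun x ⟨a, b, h, hb, hd, hx⟩ => hx ▸ hS a b h hb hd)

/- monomial computations -/
theorem mono_mul_incl (a : ℕ) (h : H) (b : ℕ) (g : H) :
    mono F H θ z0 z1 a h b * κ g = mono F H θ z0 z1 a (h * (θ ^ b) g) b := by
  rw [mono, mono, mul_assoc, upow_incl, ← mul_assoc, mul_assoc (D ^ a), ← incl_mul]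

theorem mono_mul_u (a : ℕ) (h : H) (b : ℕ) :
    mono F H θ z0 z1 a h b * U = mono F H θ z0 z1 a h (b + 1) := by
  rw [mono, mono, mul_assoc, ← pow_succ]

theorem incl_mul_mono (g : H) (a : ℕ) (h : H) (b : ℕ) :
    κ g * mono F H θ z0 z1 a h b = mono F H θ z0 z1 a ((θ ^ a) g * h) b := by
  rw [mono, mono, ← mul_assoc, ← mul_assoc, incl_dpow, mul_assoc (D ^ a), ← incl_mul]

theorem d_mul_mono (a : ℕ) (h : H) (b : ℕ) :
    D * mono F H θ z0 z1 a h b = mono F H θ z0 z1 (a + 1) h b := by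
  rw [mono, mono, ← mul_assoc, ← mul_assoc, ← pow_succ']

/- span-level right/left multiplication lemmas -/
theorem Wlt_mul_incl {n : ℤ} {B : ℕ} {x : W} (hx : x ∈ Wlt F H θ z0 z1 n B) (g : H) :
    x * κ g ∈ Wlt F H θ z0 z1 n B := by
  have : Wlt F H θ z0 z1 n B ≤ (Wlt F H θ z0 z1 n B).comap (LinearMap.mulRight F (κ g)) := by
    refine Wlt_le_of_mono_mem F H θ z0 z1 (fun a b h hb hd => ?_)
    simpa [LinearMap.mulRight_apply, mono_mul_incl] using
      mono_mem_Wlt F H θ z0 z1 (B := B) (h * (θ ^ b) g) hb hd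
  exact this hx

theorem Wlt_mul_u {n : ℤ} {B : ℕ} {x : W} (hx : x ∈ Wlt F H θ z0 z1 n B) :
    x * U ∈ Wlt F H θ z0 z1 (n + 1) (B + 1) := by
  have : Wlt F H θ z0 z1 n B ≤ (Wlt F H θ z0 z1 (n + 1) (B + 1)).comap
      (LinearMap.mulRight F U) := by
    refine Wlt_le_of_mono_mem F H θ z0 z1 (fun a b h hb hd => ?_)
    have : ((b : ℤ) + 1) - a = n + 1 := by omega
    simpa [LinearMap.mulRight_apply, mono_mul_u] using
      mono_mem_Wlt F H θ z0 z1 (B := B + 1) (a := a) (b := b + 1) h (by omega) (by push_cast; omega)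
  exact this hx

theorem incl_mul_Wlt {n : ℤ} {B : ℕ} {x : W} (hx : x ∈ Wlt F H θ z0 z1 n B) (g : H) :
    κ g * x ∈ Wlt F H θ z0 z1 n B := by
  have : Wlt F H θ z0 z1 n B ≤ (Wlt F H θ z0 z1 n B).comap (LinearMap.mulLeft F (κ g)) := by
    refine Wlt_le_of_mono_mem F H θ z0 z1 (fun a b h hb hd => ?_)
    simpa [LinearMap.mulLeft_apply, incl_mul_mono] using
      mono_mem_Wlt F H θ z0 z1 (B := B) ((θ ^ a) g * h) hb hd
  exact this hx

theorem d_mul_Wlt {n : ℤ} {B : ℕ} {x : W} (hx : x ∈ Wlt F H θ z0 z1 n B) :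
    D * x ∈ Wlt F H θ z0 z1 (n - 1) B := by
  have : Wlt F H θ z0 z1 n B ≤ (Wlt F H θ z0 z1 (n - 1) B).comap (LinearMap.mulLeft F D) := by
    refine Wlt_le_of_mono_mem F H θ z0 z1 (fun a b h hb hd => ?_)
    simpa [LinearMap.mulLeft_apply, d_mul_mono] using
      mono_mem_Wlt F H θ z0 z1 (B := B) (a := a + 1) (b := b) h hb (by push_cast; omega)
  exact this hx

theorem mono_mul_d (a : ℕ) (h : H) (b : ℕ) :
    mono F H θ z0 z1 a h b * D ∈ Wlt F H θ z0 z1 ((b : ℤ) - a - 1) (b + 1) := by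
  induction b generalizing a h with
  | zero =>
      have : mono F H θ z0 z1 a h 0 * D = mono F H θ z0 z1 (a + 1) (θ h) 0 := by
        simp only [mono, pow_zero, mul_one]
        rw [mul_assoc, rel_d, ← mul_assoc, ← pow_succ]
      rw [this]
      exact mono_mem_Wlt F H θ z0 z1 (θ h) (by omega) (by push_cast; omega)
  | succ b ih =>
      have e1 : mono F H θ z0 z1 a h (b + 1) * D =
          mono F H θ z0 z1 a h b * (U * D) := by
        simp only [mono, pow_succ]
        noncomm_ring
      have key : mono F H θ z0 z1 a h (b + 1) * D =
          mono F H θ z0 z1 a (h * (θ ^ b) z0) b +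
            ((mono F H θ z0 z1 a h b * D) * κ z1) * U := by
        rw [e1, rel_ud, mul_add, mono_mul_incl]
        congr 1
        noncomm_ring
      rw [key]
      refine Submodule.add_mem _ ?_ ?_
      · exact mono_mem_Wlt F H θ z0 z1 _ (by omega) (by push_cast; omega)
      · have h3 := Wlt_mul_u F H θ z0 z1 (Wlt_mul_incl F H θ z0 z1 (ih a h) z1)
        have he : ((b : ℤ) - a - 1) + 1 = ((b + 1 : ℕ) : ℤ) - a - 1 := by push_cast; omega
        rwa [he] at h3

theorem Wlt_mul_d {n : ℤ} {B : ℕ} {x : W} (hx : x ∈ Wlt F H θ z0 z1 n B) :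
    x * D ∈ Wlt F H θ z0 z1 (n - 1) B := by
  have : Wlt F H θ z0 z1 n B ≤ (Wlt F H θ z0 z1 (n - 1) B).comap (LinearMap.mulRight F D) := by
    refine Wlt_le_of_mono_mem F H θ z0 z1 (fun a b h hb hd => ?_)
    have := mono_mul_d F H θ z0 z1 a h b
    have h2 : ((b : ℤ) - a - 1) = n - 1 := by omega
    rw [h2] at this
    exact Wlt_mono F H θ z0 z1 (by omega) this
  exact this hx

theorem Wlt_mul_dpow {n : ℤ} {B : ℕ} {x : W} (hx : x ∈ Wlt F H θ z0 z1 n B) (k : ℕ) :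
    x * D ^ k ∈ Wlt F H θ z0 z1 (n - k) B := by
  induction k with
  | zero => simpa using hx
  | succ k ih =>
      have := Wlt_mul_d F H θ z0 z1 ih
      rw [pow_succ, ← mul_assoc]
      have h2 : (n - k) - 1 = n - (k + 1 : ℕ) := by push_cast; omega
      rwa [h2] at this

theorem u_mul_mono (a : ℕ) (h : H) (b : ℕ) :
    U * mono F H θ z0 z1 a h b ∈ Wlt F H θ z0 z1 ((b : ℤ) - a + 1) (b + 2) := by
  induction a generalizing h with
  | zero =>
      have : U * mono F H θ z0 z1 0 h b = mono F H θ z0 z1 0 (θ h) (b + 1) := by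
        rw [mono, mono, pow_zero, one_mul, one_mul, ← mul_assoc, rel_u, mul_assoc, ← pow_succ']
      rw [this]
      exact mono_mem_Wlt F H θ z0 z1 (θ h) (by omega) (by push_cast; omega)
  | succ a ih =>
      have e1 : U * mono F H θ z0 z1 (a + 1) h b = (U * D) * mono F H θ z0 z1 a h b := by
        simp only [mono, pow_succ']
        noncomm_ring
      have key : U * mono F H θ z0 z1 (a + 1) h b =
          mono F H θ z0 z1 a ((θ ^ a) z0 * h) b +
            D * (κ z1 * (U * mono F H θ z0 z1 a h b)) := by
        rw [e1, rel_ud, add_mul, incl_mul_mono]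
        congr 1
        noncomm_ring
      rw [key]
      refine Submodule.add_mem _ ?_ ?_
      · exact mono_mem_Wlt F H θ z0 z1 _ (by omega) (by push_cast; omega)
      · have h1 := ih h
        have h2 := incl_mul_Wlt F H θ z0 z1 h1 z1
        have h3 := d_mul_Wlt F H θ z0 z1 h2
        have he : ((b : ℤ) - a + 1) - 1 = (b : ℤ) - (a + 1 : ℕ) + 1 := by push_cast; omega
        rwa [he] at h3

theorem u_mul_Wlt {n : ℤ} {B : ℕ} {x : W} (hx : x ∈ Wlt F H θ z0 z1 n B) :
    U * x ∈ Wlt F H θ z0 z1 (n + 1) (B + 1) := by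
  have : Wlt F H θ z0 z1 n B ≤ (Wlt F H θ z0 z1 (n + 1) (B + 1)).comap
      (LinearMap.mulLeft F U) := by
    refine Wlt_le_of_mono_mem F H θ z0 z1 (fun a b h hb hd => ?_)
    have := u_mul_mono F H θ z0 z1 a h b
    have h2 : ((b : ℤ) - a + 1) = n + 1 := by omega
    rw [h2] at this
    exact Wlt_mono F H θ z0 z1 (by omega) this
  exact this hx

end GWAAux
namespace GWAAux
variable (F : Type) [Field F] (H : Type) [CommRing H] [Algebra F H]
variable (θ : H ≃ₐ[F] H) (z0 z1 : H)

local notation "W" => GWA F H θ z0 z1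
local notation "D" => GWA.dd F H θ z0 z1
local notation "U" => GWA.uu F H θ z0 z1
local notation "κ" => GWA.incl F H θ z0 z1

theorem u_mul_graded {n : ℤ} {x : W} (hx : x ∈ GWA.graded F H θ z0 z1 n) :
    U * x ∈ GWA.graded F H θ z0 z1 (n + 1) := by
  have : GWA.graded F H θ z0 z1 n ≤ (GWA.graded F H θ z0 z1 (n + 1)).comap
      (LinearMap.mulLeft F U) := by
    refine graded_le_of_mono_mem F H θ z0 z1 (fun a b h hd => ?_)
    have := u_mul_mono F H θ z0 z1 a h b
    have h2 : ((b : ℤ) - a + 1) = n + 1 := by omega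
    rw [h2] at this
    exact Wlt_le_graded F H θ z0 z1 _ _ this
  exact this hx

theorem d_mul_graded {n : ℤ} {x : W} (hx : x ∈ GWA.graded F H θ z0 z1 n) :
    D * x ∈ GWA.graded F H θ z0 z1 (n - 1) := by
  have : GWA.graded F H θ z0 z1 n ≤ (GWA.graded F H θ z0 z1 (n - 1)).comap
      (LinearMap.mulLeft F D) := by
    refine graded_le_of_mono_mem F H θ z0 z1 (fun a b h hd => ?_)
    have : D * mono F H θ z0 z1 a h b = mono F H θ z0 z1 (a + 1) h b :=
      d_mul_mono F H θ z0 z1 a h b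
    simpa [LinearMap.mulLeft_apply, this] using
      mono_mem_graded F H θ z0 z1 (a := a + 1) (b := b) h (by push_cast; omega)
  exact this hx

theorem incl_mul_graded {n : ℤ} {x : W} (hx : x ∈ GWA.graded F H θ z0 z1 n) (g : H) :
    κ g * x ∈ GWA.graded F H θ z0 z1 n := by
  have : GWA.graded F H θ z0 z1 n ≤ (GWA.graded F H θ z0 z1 n).comap
      (LinearMap.mulLeft F (κ g)) := by
    refine graded_le_of_mono_mem F H θ z0 z1 (fun a b h hd => ?_)
    simpa [LinearMap.mulLeft_apply, incl_mul_mono] using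
      mono_mem_graded F H θ z0 z1 ((θ ^ a) g * h) hd
  exact this hx

theorem upow_mul_graded {n : ℤ} {x : W} (hx : x ∈ GWA.graded F H θ z0 z1 n) (k : ℕ) :
    U ^ k * x ∈ GWA.graded F H θ z0 z1 (n + k) := by
  induction k with
  | zero => simpa using hx
  | succ k ih =>
      have := u_mul_graded F H θ z0 z1 ih
      rw [pow_succ', mul_assoc]
      have h2 : (n + k) + 1 = n + (k + 1 : ℕ) := by push_cast; omega
      rwa [h2] at this

theorem dpow_mul_graded {n : ℤ} {x : W} (hx : x ∈ GWA.graded F H θ z0 z1 n) (k : ℕ) :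
    D ^ k * x ∈ GWA.graded F H θ z0 z1 (n - k) := by
  induction k with
  | zero => simpa using hx
  | succ k ih =>
      have := d_mul_graded F H θ z0 z1 ih
      rw [pow_succ', mul_assoc]
      have h2 : (n - k) - 1 = n - (k + 1 : ℕ) := by push_cast; omega
      rwa [h2] at this

theorem mul_graded {j n : ℤ} {x y : W} (hx : x ∈ GWA.graded F H θ z0 z1 j)
    (hy : y ∈ GWA.graded F H θ z0 z1 n) : x * y ∈ GWA.graded F H θ z0 z1 (j + n) := by
  have : GWA.graded F H θ z0 z1 j ≤ (GWA.graded F H θ z0 z1 (j + n)).comap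
      (LinearMap.mulRight F y) := by
    refine graded_le_of_mono_mem F H θ z0 z1 (fun a b h hd => ?_)
    have e : mono F H θ z0 z1 a h b * y = D ^ a * (κ h * (U ^ b * y)) := by
      rw [mono]; noncomm_ring
    have m1 := upow_mul_graded F H θ z0 z1 hy b
    have m2 := incl_mul_graded F H θ z0 z1 m1 h
    have m3 := dpow_mul_graded F H θ z0 z1 m2 a
    have h2 : (n + b) - a = j + n := by omega
    rw [h2] at m3
    simpa [LinearMap.mulRight_apply, e] using m3
  exact this hx

/-- coefficients appearing in `u d^m = d^m (c m) u + d^(m-1) (E m)` -/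
def cseq (m : ℕ) : H := (fun _ : H => Nat.rec (1 : H) (fun _ p => θ p * z1) m) z0

theorem cseq_zero : cseq F H θ z0 z1 0 = 1 := rfl
theorem cseq_succ (m : ℕ) : cseq F H θ z0 z1 (m + 1) = θ (cseq F H θ z0 z1 m) * z1 := rfl

def Eseq (m : ℕ) : H := Nat.rec (0 : H) (fun k p => cseq F H θ z0 z1 k * z0 + θ p) m

theorem Eseq_succ (m : ℕ) :
    Eseq F H θ z0 z1 (m + 1) = cseq F H θ z0 z1 m * z0 + θ (Eseq F H θ z0 z1 m) := rfl

theorem cseq_unit (hz1 : IsUnit z1) (m : ℕ) : IsUnit (cseq F H θ z0 z1 m) := by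
  induction m with
  | zero => exact isUnit_one
  | succ m ih => exact (ih.map (θ : H →+* H)).mul hz1

theorem u_mul_dpow (m : ℕ) :
    U * D ^ (m + 1) = D ^ (m + 1) * κ (cseq F H θ z0 z1 (m + 1)) * U
      + D ^ m * κ (Eseq F H θ z0 z1 (m + 1)) := by
  induction m with
  | zero =>
      simp only [zero_add, pow_one, pow_zero, one_mul]
      rw [cseq_succ, Eseq_succ, cseq_zero]
      have h0 : Eseq F H θ z0 z1 0 = 0 := rfl
      rw [h0, map_zero, add_zero, map_one, one_mul, one_mul, rel_ud]
      exact add_comm _ _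
  | succ m ih =>
      have e1 : U * D ^ (m + 2) = (U * D ^ (m + 1)) * D := by
        rw [mul_assoc, ← pow_succ]
      rw [e1, ih, add_mul]
      have e2 : D ^ (m + 1) * κ (cseq F H θ z0 z1 (m + 1)) * U * D =
          D ^ (m + 1) * κ (cseq F H θ z0 z1 (m + 1)) * (κ z0 + D * κ z1 * U) := by
        rw [mul_assoc, rel_ud, mul_assoc]
      rw [e2, mul_add]
      have e3 : D ^ (m + 1) * κ (cseq F H θ z0 z1 (m + 1)) * (D * κ z1 * U) =
          D ^ (m + 2) * κ (cseq F H θ z0 z1 (m + 2)) * U := by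
        have : κ (cseq F H θ z0 z1 (m + 1)) * D = D * κ (θ (cseq F H θ z0 z1 (m + 1))) :=
          rel_d F H θ z0 z1 _
        calc D ^ (m + 1) * κ (cseq F H θ z0 z1 (m + 1)) * (D * κ z1 * U)
            = D ^ (m + 1) * (κ (cseq F H θ z0 z1 (m + 1)) * D) * κ z1 * U := by noncomm_ring
          _ = D ^ (m + 1) * (D * κ (θ (cseq F H θ z0 z1 (m + 1)))) * κ z1 * U := by rw [this]
          _ = D ^ (m + 2) * (κ (θ (cseq F H θ z0 z1 (m + 1))) * κ z1) * U := by
              rw [pow_succ]; noncomm_ring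
          _ = D ^ (m + 2) * κ (cseq F H θ z0 z1 (m + 2)) * U := by
              rw [← incl_mul, ← cseq_succ]
      have e4 : D ^ (m + 1) * κ (cseq F H θ z0 z1 (m + 1)) * κ z0
          + D ^ m * κ (Eseq F H θ z0 z1 (m + 1)) * D = D ^ (m + 1) * κ (Eseq F H θ z0 z1 (m + 2)) := by
        have h1 : D ^ m * κ (Eseq F H θ z0 z1 (m + 1)) * D =
            D ^ (m + 1) * κ (θ (Eseq F H θ z0 z1 (m + 1))) := by
          rw [mul_assoc, rel_d, ← mul_assoc, ← pow_succ]
        have hE : Eseq F H θ z0 z1 (m + 2) =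
            cseq F H θ z0 z1 (m + 1) * z0 + θ (Eseq F H θ z0 z1 (m + 1)) := rfl
        rw [h1, mul_assoc, ← incl_mul, hE, incl_add, mul_add]
      rw [e3, ← e4]
      abel

end GWAAux
namespace GWAAux
variable (F : Type) [Field F] (H : Type) [CommRing H] [Algebra F H]
variable (θ : H ≃ₐ[F] H) (z0 z1 : H)

local notation "W" => GWA F H θ z0 z1
local notation "D" => GWA.dd F H θ z0 z1
local notation "U" => GWA.uu F H θ z0 z1
local notation "κ" => GWA.incl F H θ z0 z1

def cc (M b : ℕ) : H := Nat.rec (1 : H) (fun k p => p * (θ ^ k) (cseq F H θ z0 z1 M)) b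

theorem cc_zero (M : ℕ) : cc F H θ z0 z1 M 0 = 1 := rfl
theorem cc_succ (M b : ℕ) :
    cc F H θ z0 z1 M (b + 1) = cc F H θ z0 z1 M b * (θ ^ b) (cseq F H θ z0 z1 M) := rfl

theorem cc_unit (hz1 : IsUnit z1) (M b : ℕ) (hM : 1 ≤ M) : IsUnit (cc F H θ z0 z1 M b) := by
  induction b with
  | zero => exact isUnit_one
  | succ b ih =>
      rw [cc_succ]
      obtain ⟨m, rfl⟩ := Nat.exists_eq_add_of_le hM
      exact ih.mul ((cseq_unit F H θ z0 z1 hz1 _).map ((θ ^ b : H ≃ₐ[F] H) : H →+* H))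

theorem key (m b : ℕ) (h : H) :
    mono F H θ z0 z1 b h b * D ^ (m + 1)
      - mono F H θ z0 z1 (b + (m + 1))
          ((θ ^ (m + 1)) h * cc F H θ z0 z1 (m + 1) b) b
      ∈ Wlt F H θ z0 z1 (-(m + 1 : ℤ)) b := by
  induction b generalizing h with
  | zero =>
      have e1 : mono F H θ z0 z1 0 h 0 * D ^ (m + 1) =
          mono F H θ z0 z1 (0 + (m + 1)) ((θ ^ (m + 1)) h * cc F H θ z0 z1 (m + 1) 0) 0 := by
        simp only [mono, pow_zero, one_mul, mul_one, cc_zero, zero_add]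
        exact incl_dpow F H θ z0 z1 (m + 1) h
      rw [e1, sub_self]
      exact Submodule.zero_mem _
  | succ b ih =>
      set X := mono F H θ z0 z1 b h b with hX
      set g := (θ ^ (m + 1)) h * cc F H θ z0 z1 (m + 1) b with hg
      set δ := X * D ^ (m + 1) - mono F H θ z0 z1 (b + (m + 1)) g b with hδ
      have hδmem : δ ∈ Wlt F H θ z0 z1 (-(m + 1 : ℤ)) b := ih h
      have hXD : X * D ^ (m + 1) = mono F H θ z0 z1 (b + (m + 1)) g b + δ := by
        rw [hδ]; abel
      have step1 : mono F H θ z0 z1 (b + 1) h (b + 1) * D ^ (m + 1) =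
          D * (X * D ^ (m + 1)) * κ (cseq F H θ z0 z1 (m + 1)) * U
            + D * (X * D ^ m) * κ (Eseq F H θ z0 z1 (m + 1)) := by
        have e0 : mono F H θ z0 z1 (b + 1) h (b + 1) = D * X * U := by
          have hd : (D : GWA F H θ z0 z1) ^ (b + 1) = D * D ^ b := pow_succ' _ _
          have hu : (U : GWA F H θ z0 z1) ^ (b + 1) = U ^ b * U := pow_succ _ _
          rw [hX, mono, mono, hd, hu]
          noncomm_ring
        have e1 : D * X * U * D ^ (m + 1) = D * (X * (U * D ^ (m + 1))) := by noncomm_ring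
        rw [e0, e1, u_mul_dpow F H θ z0 z1 m]
        noncomm_ring
      have main : D * (mono F H θ z0 z1 (b + (m + 1)) g b) * κ (cseq F H θ z0 z1 (m + 1)) * U =
          mono F H θ z0 z1 ((b + 1) + (m + 1))
            ((θ ^ (m + 1)) h * cc F H θ z0 z1 (m + 1) (b + 1)) (b + 1) := by
        rw [d_mul_mono, mono_mul_incl, mono_mul_u]
        have harith : b + (m + 1) + 1 = (b + 1) + (m + 1) := by omega
        rw [harith, hg, cc_succ, mul_assoc]
      have e1mem : D * δ * κ (cseq F H θ z0 z1 (m + 1)) * U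
          ∈ Wlt F H θ z0 z1 (-(m + 1 : ℤ)) (b + 1) := by
        have h1 := d_mul_Wlt F H θ z0 z1 hδmem
        have h2 := Wlt_mul_incl F H θ z0 z1 h1 (cseq F H θ z0 z1 (m + 1))
        have h3 := Wlt_mul_u F H θ z0 z1 h2
        have he : (-(m + 1 : ℤ) - 1) + 1 = -(m + 1 : ℤ) := by omega
        rwa [he] at h3
      have e2mem : D * (X * D ^ m) * κ (Eseq F H θ z0 z1 (m + 1))
          ∈ Wlt F H θ z0 z1 (-(m + 1 : ℤ)) (b + 1) := by
        have h0 : X ∈ Wlt F H θ z0 z1 0 (b + 1) :=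
          mono_mem_Wlt F H θ z0 z1 h (by omega) (by omega)
        have h1 := Wlt_mul_dpow F H θ z0 z1 h0 m
        have h2 := d_mul_Wlt F H θ z0 z1 h1
        have h3 := Wlt_mul_incl F H θ z0 z1 h2 (Eseq F H θ z0 z1 (m + 1))
        have he : (0 : ℤ) - m - 1 = -(m + 1 : ℤ) := by omega
        rwa [he] at h3
      have total : mono F H θ z0 z1 (b + 1) h (b + 1) * D ^ (m + 1)
          - mono F H θ z0 z1 ((b + 1) + (m + 1))
              ((θ ^ (m + 1)) h * cc F H θ z0 z1 (m + 1) (b + 1)) (b + 1)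
          = D * δ * κ (cseq F H θ z0 z1 (m + 1)) * U
            + D * (X * D ^ m) * κ (Eseq F H θ z0 z1 (m + 1)) := by
        rw [step1, hXD, ← main]
        noncomm_ring
      rw [total]
      exact Submodule.add_mem _ e1mem e2mem

theorem mono_diag_mem_graded_zero (a : ℕ) (h : H) :
    mono F H θ z0 z1 a h a ∈ GWA.graded F H θ z0 z1 0 :=
  mono_mem_graded F H θ z0 z1 h (by omega)

/-- Surjectivity for nonnegative degrees. -/
theorem surj_nonneg (k : ℕ) :
    GWA.graded F H θ z0 z1 (k : ℤ) ≤
      (GWA.graded F H θ z0 z1 0).map (LinearMap.mulRight F (U ^ k)) := by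
  refine graded_le_of_mono_mem F H θ z0 z1 (fun a b h hd => ?_)
  refine ⟨mono F H θ z0 z1 a h a, mono_diag_mem_graded_zero F H θ z0 z1 a h, ?_⟩
  have hb : b = a + k := by omega
  subst hb
  simp only [LinearMap.mulRight_apply, mono, mul_assoc, ← pow_add]

/-- Surjectivity for negative degrees. -/
theorem surj_neg (hz1 : IsUnit z1) (m : ℕ) :
    GWA.graded F H θ z0 z1 (-(m + 1 : ℤ)) ≤
      (GWA.graded F H θ z0 z1 0).map (LinearMap.mulRight F (D ^ (m + 1))) := by
  set S := (GWA.graded F H θ z0 z1 0).map (LinearMap.mulRight F (D ^ (m + 1))) with hS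
  have main : ∀ B : ℕ, Wlt F H θ z0 z1 (-(m + 1 : ℤ)) B ≤ S := by
    intro B
    induction B with
    | zero => exact Wlt_le_of_mono_mem F H θ z0 z1 (fun a b h hb hd => absurd hb (by omega))
    | succ B ihB =>
        refine Wlt_le_of_mono_mem F H θ z0 z1 (fun a b g hb hd => ?_)
        have ha : a = b + (m + 1) := by omega
        subst ha
        obtain ⟨cu, hcu⟩ := cc_unit F H θ z0 z1 hz1 (m + 1) b (by omega)
        set h := ((θ ^ (m + 1) : H ≃ₐ[F] H)).symm (g * (↑cu⁻¹ : H)) with hh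
        have hgh : (θ ^ (m + 1)) h * cc F H θ z0 z1 (m + 1) b = g := by
          rw [hh, AlgEquiv.apply_symm_apply, mul_assoc, ← hcu, Units.inv_mul, mul_one]
        have hk := key F H θ z0 z1 m b h
        set δ := mono F H θ z0 z1 b h b * D ^ (m + 1)
          - mono F H θ z0 z1 (b + (m + 1))
              ((θ ^ (m + 1)) h * cc F H θ z0 z1 (m + 1) b) b with hδ
        have hδW : δ ∈ Wlt F H θ z0 z1 (-(m + 1 : ℤ)) B :=
          Wlt_mono F H θ z0 z1 (by omega) hk
        have hδS : δ ∈ S := ihB hδW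
        have hmain : mono F H θ z0 z1 b h b * D ^ (m + 1) ∈ S :=
          ⟨mono F H θ z0 z1 b h b, mono_diag_mem_graded_zero F H θ z0 z1 b h, rfl⟩
        have heq : mono F H θ z0 z1 (b + (m + 1)) g b
            = mono F H θ z0 z1 b h b * D ^ (m + 1) - δ := by rw [hδ, hgh]; abel
        rw [heq]
        exact Submodule.sub_mem _ hmain hδS
  refine graded_le_of_mono_mem F H θ z0 z1 (fun a b h hd => ?_)
  exact main (b + 1) (mono_mem_Wlt F H θ z0 z1 h (by omega) hd)

end GWAAux
namespace GWAAux
variable (F : Type) [Field F] (H : Type) [CommRing H] [Algebra F H]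
variable (θ : H ≃ₐ[F] H) (z0 z1 : H)

local notation "W" => GWA F H θ z0 z1
local notation "D" => GWA.dd F H θ z0 z1
local notation "U" => GWA.uu F H θ z0 z1
local notation "κ" => GWA.incl F H θ z0 z1

/-- The normal-form module: finitely supported `H`-valued functions on pairs `(a, b)`,
representing `Σ d^a h u^b`. -/
abbrev Mod := (ℕ × ℕ) →₀ H

/-- action of `h ∈ H`. -/
def Hop (h : H) : Mod H →ₗ[F] Mod H :=
  Finsupp.lsum F fun p => Finsupp.lsingle p ∘ₗ LinearMap.mulLeft F ((θ ^ p.1) h)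

theorem Hop_single (h : H) (p : ℕ × ℕ) (x : H) :
    Hop F H θ h (Finsupp.single p x) = Finsupp.single p ((θ ^ p.1) h * x) := by
  simp [Hop]

/-- action of `d`. -/
def Dop : Mod H →ₗ[F] Mod H := Finsupp.lmapDomain H F (fun p => (p.1 + 1, p.2))

theorem Dop_single (p : ℕ × ℕ) (x : H) :
    Dop F H (Finsupp.single p x) = Finsupp.single (p.1 + 1, p.2) x := by
  simp [Dop, Finsupp.mapDomain_single]

/-- action of `u` on a basis vector, by recursion on the `d`-exponent. -/
def uS : ℕ → ℕ → (H →ₗ[F] Mod H)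
  | 0, b => Finsupp.lsingle (0, b + 1) ∘ₗ (θ.toLinearMap : H →ₗ[F] H)
  | a + 1, b => Finsupp.lsingle (a, b) ∘ₗ LinearMap.mulLeft F ((θ ^ a) z0)
      + Dop F H ∘ₗ Hop F H θ z1 ∘ₗ uS a b

def Uop : Mod H →ₗ[F] Mod H := Finsupp.lsum F fun p => uS F H θ z0 z1 p.1 p.2

theorem Uop_single (a b : ℕ) (x : H) :
    Uop F H θ z0 z1 (Finsupp.single (a, b) x) = uS F H θ z0 z1 a b x := by
  simp [Uop]

theorem Hop_one : Hop F H θ (1 : H) = LinearMap.id := by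
  refine Finsupp.lhom_ext fun p x => ?_
  simp [Hop_single]

theorem Hop_add (g h : H) : Hop F H θ (g + h) = Hop F H θ g + Hop F H θ h := by
  refine Finsupp.lhom_ext fun p x => ?_
  simp [Hop_single, add_mul, Finsupp.single_add]

theorem Hop_mul (g h : H) : Hop F H θ (g * h) = Hop F H θ g ∘ₗ Hop F H θ h := by
  refine Finsupp.lhom_ext fun p x => ?_
  rw [LinearMap.comp_apply, Hop_single, Hop_single, Hop_single]
  congr 1
  rw [map_mul, mul_assoc]

theorem Hop_smul (r : F) (h : H) : Hop F H θ (r • h) = r • Hop F H θ h := by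
  refine Finsupp.lhom_ext fun p x => ?_
  rw [Hop_single, LinearMap.smul_apply, Hop_single, Finsupp.smul_single]
  congr 1
  rw [map_smul, smul_mul_assoc]

theorem Hop_Dop (g : H) : Hop F H θ g ∘ₗ Dop F H = Dop F H ∘ₗ Hop F H θ (θ g) := by
  refine Finsupp.lhom_ext fun p x => ?_
  simp only [LinearMap.comp_apply, Dop_single, Hop_single]
  congr 1

theorem uS_comm (a b : ℕ) (h : H) (x : H) :
    uS F H θ z0 z1 a b ((θ ^ a) h * x) = Hop F H θ (θ h) (uS F H θ z0 z1 a b x) := by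
  induction a generalizing h with
  | zero =>
      simp only [uS, LinearMap.comp_apply, pow_zero, AlgEquiv.one_apply,
        AlgEquiv.toLinearMap_apply, map_mul, Finsupp.lsingle_apply, Hop_single]
  | succ a ih =>
      have hθ : (θ ^ (a + 1)) h = (θ ^ a) (θ h) := by rw [pow_succ]; rfl
      simp only [uS, LinearMap.add_apply, LinearMap.comp_apply, Finsupp.lsingle_apply,
        LinearMap.mulLeft_apply, hθ]
      rw [ih (θ h)]
      rw [map_add (Hop F H θ (θ h))]
      congr 1
      · rw [Hop_single]
        congr 1
        ring
      · -- Hop (θ h) (Dop y) = Dop (Hop (θ (θ h)) y) and Hop commutes with Hop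
        have hD := Hop_Dop F H θ (θ h)
        have hDy : ∀ y, Hop F H θ (θ h) (Dop F H y) = Dop F H (Hop F H θ (θ (θ h)) y) := by
          intro y
          have := congrArg (fun φ => φ y) hD
          simpa using this
        rw [hDy]
        congr 1
        have hcomm : ∀ y, Hop F H θ (θ (θ h)) (Hop F H θ z1 y)
            = Hop F H θ z1 (Hop F H θ (θ (θ h)) y) := by
          intro y
          have h1 := congrArg (fun φ => φ y) (Hop_mul F H θ (θ (θ h)) z1)
          have h2 := congrArg (fun φ => φ y) (Hop_mul F H θ z1 (θ (θ h)))
          simp only [LinearMap.comp_apply] at h1 h2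
          rw [← h1, mul_comm, h2]
        rw [hcomm]

theorem Uop_Hop (h : H) :
    Uop F H θ z0 z1 ∘ₗ Hop F H θ h = Hop F H θ (θ h) ∘ₗ Uop F H θ z0 z1 := by
  refine Finsupp.lhom_ext fun p x => ?_
  obtain ⟨a, b⟩ := p
  simp only [LinearMap.comp_apply, Hop_single, Uop_single]
  exact uS_comm F H θ z0 z1 a b h x

theorem Uop_Dop :
    Uop F H θ z0 z1 ∘ₗ Dop F H =
      Hop F H θ z0 + Dop F H ∘ₗ Hop F H θ z1 ∘ₗ Uop F H θ z0 z1 := by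
  refine Finsupp.lhom_ext fun p x => ?_
  obtain ⟨a, b⟩ := p
  simp only [LinearMap.comp_apply, LinearMap.add_apply, Dop_single, Uop_single, uS,
    LinearMap.comp_apply, Finsupp.lsingle_apply, LinearMap.mulLeft_apply, Hop_single]

end GWAAux
namespace GWAAux
variable (F : Type) [Field F] (H : Type) [CommRing H] [Algebra F H]
variable (θ : H ≃ₐ[F] H) (z0 z1 : H)

local notation "W" => GWA F H θ z0 z1
local notation "D" => GWA.dd F H θ z0 z1
local notation "U" => GWA.uu F H θ z0 z1
local notation "κ" => GWA.incl F H θ z0 z1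

/-- generators to endomorphisms -/
def genMap : GWAGen H → Module.End F (Mod H)
  | .base h => Hop F H θ h
  | .d => Dop F H
  | .u => Uop F H θ z0 z1

def freeMap : FreeAlgebra F (GWAGen H) →ₐ[F] Module.End F (Mod H) :=
  FreeAlgebra.lift F (genMap F H θ z0 z1)

theorem freeMap_rel : ∀ ⦃x y : FreeAlgebra F (GWAGen H)⦄, GWARel F H θ z0 z1 x y →
    freeMap F H θ z0 z1 x = freeMap F H θ z0 z1 y := by
  intro x y r
  induction r with
  | base_one =>
      simp only [freeMap, map_one, FreeAlgebra.lift_ι_apply, genMap]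
      exact Hop_one F H θ
  | base_add a b =>
      simp only [freeMap, map_add, FreeAlgebra.lift_ι_apply, genMap]
      exact Hop_add F H θ a b
  | base_mul a b =>
      simp only [freeMap, map_mul, FreeAlgebra.lift_ι_apply, genMap]
      exact Hop_mul F H θ a b
  | base_smul r a =>
      simp only [freeMap, map_smul, FreeAlgebra.lift_ι_apply, genMap]
      exact Hop_smul F H θ r a
  | u_comm a =>
      simp only [freeMap, map_mul, FreeAlgebra.lift_ι_apply, genMap]
      exact Uop_Hop F H θ z0 z1 a
  | d_comm a =>
      simp only [freeMap, map_mul, FreeAlgebra.lift_ι_apply, genMap]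
      exact (Hop_Dop F H θ a)
  | ud =>
      simp only [freeMap, map_mul, map_add, FreeAlgebra.lift_ι_apply, genMap]
      have := Uop_Dop F H θ z0 z1
      exact this

def Φ : GWA F H θ z0 z1 →ₐ[F] Module.End F (Mod H) :=
  RingQuot.liftAlgHom F ⟨freeMap F H θ z0 z1, freeMap_rel F H θ z0 z1⟩

theorem Φ_incl (h : H) : Φ F H θ z0 z1 (κ h) = Hop F H θ h := by
  rw [GWA.incl, Φ, RingQuot.liftAlgHom_mkAlgHom_apply]
  simp [freeMap, genMap]

theorem Φ_d : Φ F H θ z0 z1 D = Dop F H := by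
  rw [GWA.dd, Φ, RingQuot.liftAlgHom_mkAlgHom_apply]
  simp [freeMap, genMap]

theorem Φ_u : Φ F H θ z0 z1 U = Uop F H θ z0 z1 := by
  rw [GWA.uu, Φ, RingQuot.liftAlgHom_mkAlgHom_apply]
  simp [freeMap, genMap]

/-- evaluation at the vacuum vector -/
def ev : GWA F H θ z0 z1 →ₗ[F] Mod H where
  toFun w := Φ F H θ z0 z1 w (Finsupp.single (0, 0) 1)
  map_add' x y := by simp only [map_add, LinearMap.add_apply]
  map_smul' r x := by simp only [map_smul, LinearMap.smul_apply, RingHom.id_apply]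

theorem Uop_pow_vac (b : ℕ) :
    (Uop F H θ z0 z1 ^ b) (Finsupp.single ((0 : ℕ), (0 : ℕ)) (1 : H))
      = Finsupp.single (0, b) 1 := by
  induction b with
  | zero => rfl
  | succ b ih =>
      rw [pow_succ', Module.End.mul_apply, ih, Uop_single]
      simp [uS, map_one]

theorem ev_mono (a : ℕ) (h : H) (b : ℕ) :
    ev F H θ z0 z1 (mono F H θ z0 z1 a h b) = Finsupp.single (a, b) h := by
  have hΦ : Φ F H θ z0 z1 (mono F H θ z0 z1 a h b) =
      (Dop F H) ^ a * Hop F H θ h * (Uop F H θ z0 z1) ^ b := by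
    rw [mono, map_mul, map_mul, map_pow, map_pow, Φ_incl, Φ_d, Φ_u]
  show Φ F H θ z0 z1 (mono F H θ z0 z1 a h b) (Finsupp.single (0, 0) 1) = _
  rw [hΦ, Module.End.mul_apply, Module.End.mul_apply, Uop_pow_vac]
  have h1 : Hop F H θ h (Finsupp.single ((0 : ℕ), b) 1) = Finsupp.single ((0 : ℕ), b) h := by
    rw [Hop_single]
    simp
  rw [h1]
  clear hΦ h1
  induction a with
  | zero => simp
  | succ a ih =>
      rw [pow_succ', Module.End.mul_apply, ih, Dop_single]

end GWAAux
namespace GWAAux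
variable (F : Type) [Field F] (H : Type) [CommRing H] [Algebra F H]
variable (θ : H ≃ₐ[F] H) (z0 z1 : H)

local notation "W" => GWA F H θ z0 z1
local notation "D" => GWA.dd F H θ z0 z1
local notation "U" => GWA.uu F H θ z0 z1
local notation "κ" => GWA.incl F H θ z0 z1

theorem ev_Wlt {n : ℤ} {B : ℕ} {x : W} (hx : x ∈ Wlt F H θ z0 z1 n B) :
    ∀ p : ℕ × ℕ, B ≤ p.2 → ev F H θ z0 z1 x p = 0 := by
  refine Submodule.span_induction ?_ ?_ ?_ ?_ hx
  · rintro x ⟨a, b, h, hb, hd, rfl⟩ p hp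
    rw [ev_mono]
    apply Finsupp.single_eq_of_ne'
    intro hcontra
    rw [← hcontra] at hp
    omega
  · intro p hp
    simp
  · intro x y _ _ ihx ihy p hp
    rw [map_add, Finsupp.add_apply, ihx p hp, ihy p hp, add_zero]
  · intro r x _ ihx p hp
    rw [map_smul, Finsupp.smul_apply, ihx p hp, smul_zero]

/-- `H`-linear parametrization of monomials -/
def inclₗ : H →ₗ[F] GWA F H θ z0 z1 where
  toFun := κ
  map_add' := incl_add F H θ z0 z1
  map_smul' r a := by
    simp only [RingHom.id_apply]
    exact incl_smul F H θ z0 z1 r a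

def mlin (a b : ℕ) : H →ₗ[F] GWA F H θ z0 z1 :=
  LinearMap.mulRight F (U ^ b) ∘ₗ LinearMap.mulLeft F (D ^ a) ∘ₗ inclₗ F H θ z0 z1

theorem mlin_apply (a b : ℕ) (h : H) : mlin F H θ z0 z1 a b h = mono F H θ z0 z1 a h b := rfl

def Ψ0 : (ℕ →₀ H) →ₗ[F] GWA F H θ z0 z1 :=
  Finsupp.lsum F fun a => mlin F H θ z0 z1 a a

theorem Ψ0_apply (f : ℕ →₀ H) :
    Ψ0 F H θ z0 z1 f = f.sum fun a h => mono F H θ z0 z1 a h a := by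
  rw [Ψ0, Finsupp.lsum_apply]
  rfl

theorem graded_zero_repr {w : W} (hw : w ∈ GWA.graded F H θ z0 z1 0) :
    ∃ f : ℕ →₀ H, w = Ψ0 F H θ z0 z1 f := by
  have : GWA.graded F H θ z0 z1 0 ≤ LinearMap.range (Ψ0 F H θ z0 z1) := by
    refine graded_le_of_mono_mem F H θ z0 z1 (fun a b h hd => ?_)
    have hb : b = a := by omega
    subst hb
    exact ⟨Finsupp.single b h, by rw [Ψ0, Finsupp.lsum_single, mlin_apply]⟩
  obtain ⟨f, hf⟩ := this hw
  exact ⟨f, hf.symm⟩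

theorem uniq_nonneg (k : ℕ) {w : W} (hw : w ∈ GWA.graded F H θ z0 z1 0)
    (h0 : w * U ^ k = 0) : w = 0 := by
  obtain ⟨f, rfl⟩ := graded_zero_repr F H θ z0 z1 hw
  have e1 : Ψ0 F H θ z0 z1 f * U ^ k = f.sum fun a h => mono F H θ z0 z1 a h (a + k) := by
    rw [Ψ0_apply, Finsupp.sum_mul]
    refine Finsupp.sum_congr fun a _ => ?_
    rw [mono, mono, mul_assoc, ← pow_add]
  have e2 : ev F H θ z0 z1 (Ψ0 F H θ z0 z1 f * U ^ k)
      = Finsupp.mapDomain (fun a => (a, a + k)) f := by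
    rw [e1, map_finsuppSum]
    rw [Finsupp.mapDomain]
    exact Finsupp.sum_congr fun a _ => ev_mono F H θ z0 z1 a _ (a + k)
  rw [h0, map_zero] at e2
  have hinj : Function.Injective (fun a : ℕ => ((a, a + k) : ℕ × ℕ)) := by
    intro a a' ha
    simpa using congrArg Prod.fst ha
  have hf : f = 0 := by
    apply Finsupp.mapDomain_injective hinj
    rw [← e2, Finsupp.mapDomain_zero]
  rw [hf, map_zero]

theorem uniq_neg (hz1 : IsUnit z1) (m : ℕ) {w : W} (hw : w ∈ GWA.graded F H θ z0 z1 0)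
    (h0 : w * D ^ (m + 1) = 0) : w = 0 := by
  obtain ⟨f, rfl⟩ := graded_zero_repr F H θ z0 z1 hw
  by_contra hne
  have hfne : f ≠ 0 := by rintro rfl; exact hne (map_zero _)
  have hsupp : f.support.Nonempty := Finsupp.support_nonempty_iff.2 hfne
  set A := f.support.max' hsupp with hA
  have hAmem : A ∈ f.support := f.support.max'_mem hsupp
  set p : ℕ × ℕ := (A + (m + 1), A) with hp
  have e1 : Ψ0 F H θ z0 z1 f * D ^ (m + 1)
      = f.sum fun a h => mono F H θ z0 z1 a h a * D ^ (m + 1) := by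
    rw [Ψ0_apply, Finsupp.sum_mul]
  have e2 : ev F H θ z0 z1 (Ψ0 F H θ z0 z1 f * D ^ (m + 1)) p = 0 := by
    rw [h0, map_zero]; rfl
  rw [e1, map_finsuppSum] at e2
  rw [Finsupp.sum, Finsupp.finset_sum_apply] at e2
  have term : ∀ a ∈ f.support,
      ev F H θ z0 z1 (mono F H θ z0 z1 a (f a) a * D ^ (m + 1)) p
        = if a = A then (θ ^ (m + 1)) (f A) * cc F H θ z0 z1 (m + 1) A else 0 := by
    intro a ha
    have haA : a ≤ A := f.support.le_max' a ha
    have hk := key F H θ z0 z1 m a (f a)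
    set δ := mono F H θ z0 z1 a (f a) a * D ^ (m + 1)
      - mono F H θ z0 z1 (a + (m + 1))
          ((θ ^ (m + 1)) (f a) * cc F H θ z0 z1 (m + 1) a) a with hδ
    have hδ0 : ev F H θ z0 z1 δ p = 0 := ev_Wlt F H θ z0 z1 hk p (by rw [hp]; exact haA)
    have hsplit : mono F H θ z0 z1 a (f a) a * D ^ (m + 1)
        = mono F H θ z0 z1 (a + (m + 1))
            ((θ ^ (m + 1)) (f a) * cc F H θ z0 z1 (m + 1) a) a + δ := by
      rw [hδ]; abel
    rw [hsplit, map_add, Finsupp.add_apply, hδ0, add_zero, ev_mono]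
    by_cases hcase : a = A
    · subst hcase
      rw [if_pos rfl, Finsupp.single_apply, if_pos rfl]
    · rw [if_neg hcase]
      apply Finsupp.single_eq_of_ne'
      intro hcontra
      apply hcase
      have := congrArg Prod.snd hcontra
      simpa [hp] using this
  rw [Finset.sum_congr rfl term, Finset.sum_ite_eq' f.support A] at e2
  rw [if_pos hAmem] at e2
  obtain ⟨cu, hcu⟩ := cc_unit F H θ z0 z1 hz1 (m + 1) A (by omega)
  have hfA : (θ ^ (m + 1)) (f A) = 0 := by
    have := congrArg (fun x => x * (↑cu⁻¹ : H)) e2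
    simpa [mul_assoc, ← hcu, Units.mul_inv, zero_mul] using this
  have : f A = 0 := by
    have := congrArg ((θ ^ (m + 1) : H ≃ₐ[F] H).symm) hfA
    rwa [AlgEquiv.symm_apply_apply, map_zero] at this
  exact (Finsupp.mem_support_iff.1 hAmem) this

end GWAAux
theorem graded_pieces_free_rank_one (hz1 : IsUnit z1) :
    (∀ x ∈ GWA.graded F H θ z0 z1 0, ∀ y ∈ GWA.graded F H θ z0 z1 0,
        x * y ∈ GWA.graded F H θ z0 z1 0) ∧
    (∀ n : ℤ, ∀ x ∈ GWA.graded F H θ z0 z1 0, ∀ y ∈ GWA.graded F H θ z0 z1 n,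
        x * y ∈ GWA.graded F H θ z0 z1 n) ∧
    (∀ n : ℤ, ∃ x ∈ GWA.graded F H θ z0 z1 n,
        ∀ y ∈ GWA.graded F H θ z0 z1 n,
          ∃! a : GWA F H θ z0 z1, a ∈ GWA.graded F H θ z0 z1 0 ∧ a * x = y) := by
  refine ⟨?_, ?_, ?_⟩
  · intro x hx y hy
    simpa using GWAAux.mul_graded F H θ z0 z1 hx hy
  · intro n x hx y hy
    simpa using GWAAux.mul_graded F H θ z0 z1 hx hy
  · intro n
    cases n with
    | ofNat k =>
        have hco : (Int.ofNat k) = ((k : ℕ) : ℤ) := rfl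
        rw [hco]
        have hxU : GWAAux.mono F H θ z0 z1 0 1 k = GWA.uu F H θ z0 z1 ^ k := by
          simp [GWAAux.mono, GWAAux.incl_one]
        refine ⟨GWAAux.mono F H θ z0 z1 0 1 k,
          GWAAux.mono_mem_graded F H θ z0 z1 1 (by simp), ?_⟩
        intro y hy
        obtain ⟨a0, ha0, haeq⟩ := GWAAux.surj_nonneg F H θ z0 z1 k hy
        simp only [LinearMap.mulRight_apply] at haeq
        refine ⟨a0, ⟨ha0, by rw [hxU]; exact haeq⟩, ?_⟩
        rintro a' ⟨ha', heq'⟩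
        rw [hxU] at heq'
        have hsub : (a' - a0) * GWA.uu F H θ z0 z1 ^ k = 0 := by
          rw [sub_mul, heq', haeq, sub_self]
        have := GWAAux.uniq_nonneg F H θ z0 z1 k (Submodule.sub_mem _ ha' ha0) hsub
        exact sub_eq_zero.1 this
    | negSucc m =>
        have hco : (Int.negSucc m) = -(m + 1 : ℤ) := Int.negSucc_eq m
        rw [hco]
        have hxD : GWAAux.mono F H θ z0 z1 (m + 1) 1 0 = GWA.dd F H θ z0 z1 ^ (m + 1) := by
          simp [GWAAux.mono, GWAAux.incl_one]
        refine ⟨GWAAux.mono F H θ z0 z1 (m + 1) 1 0,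
          GWAAux.mono_mem_graded F H θ z0 z1 1 (by push_cast; omega), ?_⟩
        intro y hy
        obtain ⟨a0, ha0, haeq⟩ := GWAAux.surj_neg F H θ z0 z1 hz1 m hy
        simp only [LinearMap.mulRight_apply] at haeq
        refine ⟨a0, ⟨ha0, by rw [hxD]; exact haeq⟩, ?_⟩
        rintro a' ⟨ha', heq'⟩
        rw [hxD] at heq'
        have hsub : (a' - a0) * GWA.dd F H θ z0 z1 ^ (m + 1) = 0 := by
          rw [sub_mul, heq', haeq, sub_self]
        have := GWAAux.uniq_neg F H θ z0 z1 hz1 m (Submodule.sub_mem _ ha' ha0) hsub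
        exact sub_eq_zero.1 this
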